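/- Let I be a finite nonempty set of lanes, U a nonempty control set, and fix a grid point x_j and a time step Δt > 0. Suppose the interpolation operator has the form 𝕀[V](y, α) = Σ_{i=1}^{M} γ_i(y)·V(x_i, α) with weights satisfying γ_i(y) ≥ 0 and Σ_i γ_i(y) = 1 for every y. Define Σ(x_j, α, V) = inf_{u ∈ U} { Δt·ℓ(x_j, α) + 𝕀[V](x_j + Δt·h(x_j, α, u), α) } and Ψ(x_j, α, V) = min_{β ∈ I}{ V(x_j, β) + C(x_j, α, β) }, and let S(x_j, α, V) = min{ Ψ(x_j, α, V), Σ(x_j, α, V) }. Then the scheme operator S is monotone: if V(x_i, β) ≤ W(x_i, β) for all grid nodes (x_i, β), then S(x_j, α, V) ≤ S(x_j, α, W) for all (x_j, α). -/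

import Mathlib

/-- The semi-Lagrangian scheme operator
`S(x_j, α, V) = min{ Ψ(x_j, α, V), Σ(x_j, α, V) }` for the hybrid HJB
quasi-variational inequality, with interpolation weights nonnegative and
summing to one, is monotone: `V ≤ W` on grid nodes implies `S V ≤ S W`. -/
theorem sl_hjb_scheme_monotone {I U : Type*} [Fintype I] [Nonempty I] [Nonempty U]
    (M : ℕ) (x : Fin M → ℝ) (Δt : ℝ) (hΔt : 0 < Δt)
    (γ : Fin M → ℝ → ℝ)
    (hγpos : ∀ (i : Fin M) (y : ℝ), 0 ≤ γ i y)
    (hγsum : ∀ y : ℝ, ∑ i, γ i y = 1)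
    (ℓ : ℝ → I → ℝ) (h : ℝ → I → U → ℝ) (C : ℝ → I → I → ℝ)
    (Interp : (Fin M → I → ℝ) → ℝ → I → ℝ)
    (hInterp : ∀ (V : Fin M → I → ℝ) (y : ℝ) (α : I),
      Interp V y α = ∑ i, γ i y * V i α)
    (Ψ : Fin M → I → (Fin M → I → ℝ) → ℝ)
    (hΨ : ∀ (j : Fin M) (α : I) (V : Fin M → I → ℝ),
      Ψ j α V = Finset.univ.inf' Finset.univ_nonempty (fun β => V j β + C (x j) α β))
    (Sig : Fin M → I → (Fin M → I → ℝ) → ℝ)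
    (hSig : ∀ (j : Fin M) (α : I) (V : Fin M → I → ℝ),
      Sig j α V = ⨅ u : U, (Δt * ℓ (x j) α + Interp V (x j + Δt * h (x j) α u) α))
    (S : Fin M → I → (Fin M → I → ℝ) → ℝ)
    (hS : ∀ (j : Fin M) (α : I) (V : Fin M → I → ℝ),
      S j α V = min (Ψ j α V) (Sig j α V))
    (V W : Fin M → I → ℝ) (hVW : ∀ (i : Fin M) (β : I), V i β ≤ W i β) :
    ∀ (j : Fin M) (α : I), S j α V ≤ S j α W := by
  intro j α
  have hM : Nonempty (Fin M) := by
    by_contra hne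
    have : (∑ i, γ i 0) = 0 := Finset.sum_eq_zero (fun i _ => absurd ⟨i⟩ hne)
    rw [hγsum 0] at this; norm_num at this
  -- Interp is monotone
  have hImono : ∀ (y : ℝ), Interp V y α ≤ Interp W y α := by
    intro y
    rw [hInterp, hInterp]
    exact Finset.sum_le_sum fun i _ =>
      mul_le_mul_of_nonneg_left (hVW i α) (hγpos i y)
  -- lower bound for Interp V
  set m := Finset.univ.inf' (Finset.univ_nonempty (α := Fin M)) (fun i => V i α) with hm
  have hImlb : ∀ y : ℝ, m ≤ Interp V y α := by
    intro y
    rw [hInterp]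
    calc m = ∑ i, γ i y * m := by rw [← Finset.sum_mul, hγsum, one_mul]
    _ ≤ ∑ i, γ i y * V i α := Finset.sum_le_sum fun i _ =>
        mul_le_mul_of_nonneg_left (Finset.inf'_le _ (Finset.mem_univ i)) (hγpos i y)
  rw [hS, hS]
  apply min_le_min
  · rw [hΨ, hΨ]
    exact Finset.le_inf' _ _ fun β _ =>
      Finset.inf'_le_of_le _ (Finset.mem_univ β) (add_le_add_left (hVW j β) _)
  · rw [hSig, hSig]
    refine ciInf_mono ⟨Δt * ℓ (x j) α + m, ?_⟩ ?_
    · rintro z ⟨u, rfl⟩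
      exact add_le_add_right (hImlb _) _
    · intro u
      exact add_le_add_right (hImono _) _
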